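/- Let 𝒮 ⊆ 2^V be simple and separator-free. Form 𝒮' from 𝒮 by adding, for each minimal A ∈ 𝒮 and each maximal B ∈ 𝒮 with A ⊊ B and B\A ∉ 𝒮, the set B\A. Then every consecutive ordering of V to 𝒮' is a contiguous ordering of V to 𝒮. -/

import Mathlib

/-- `S` occupies consecutive positions in the ordering `σ`. -/
def IsIntervalIn {V : Type*} {n : ℕ} (σ : Fin n ≃ V) (S : Set V) : Prop :=
  ∀ i j k : Fin n, i ≤ j → j ≤ k → σ i ∈ S → σ k ∈ S → σ j ∈ S

/-- `σ` is a consecutive ordering of `V` to `𝒮`. -/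
def ConsecutiveOrd {V : Type*} {n : ℕ} (σ : Fin n ≃ V) (𝒮 : Set (Set V)) : Prop :=
  ∀ S ∈ 𝒮, IsIntervalIn σ S

/-- `σ` is a contiguous ordering of `V` to `𝒮`. -/
def ContiguousOrd {V : Type*} {n : ℕ} (σ : Fin n ≃ V) (𝒮 : Set (Set V)) : Prop :=
  (∀ S ∈ 𝒮, IsIntervalIn σ S) ∧
  ∀ S ∈ 𝒮, ∀ S' ∈ 𝒮, S ⊆ S' →
    ∀ i j : Fin n, σ i ∈ S' → σ j ∈ S' → (∀ k : Fin n, σ k ∈ S' → i ≤ k ∧ k ≤ j) →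
      (σ i ∈ S ∨ σ j ∈ S)

def MinimalIn {V : Type*} (𝒮 : Set (Set V)) (A : Set V) : Prop :=
  A ∈ 𝒮 ∧ ∀ A' ∈ 𝒮, A' ⊆ A → A' = A

def MaximalIn {V : Type*} (𝒮 : Set (Set V)) (B : Set V) : Prop :=
  B ∈ 𝒮 ∧ ∀ B' ∈ 𝒮, B ⊆ B' → B' = B

/-- No two distinct elements are equivalent for `𝒮`. -/
def SimpleFam {V : Type*} (𝒮 : Set (Set V)) : Prop :=
  ∀ u v : V, (∀ S ∈ 𝒮, (u ∈ S ↔ v ∈ S)) → u = v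

def IsSeparator {V : Type*} (𝒮 : Set (Set V)) (C : Set V) : Prop :=
  C.Nonempty ∧ C ≠ Set.univ ∧ ∀ S ∈ 𝒮, S ⊆ C ∨ Disjoint S C

def SeparatorFree {V : Type*} (𝒮 : Set (Set V)) : Prop :=
  ¬ ∃ C : Set V, IsSeparator 𝒮 C

/-- The augmented family `𝒮'`: `𝒮` together with `B \ A` for each minimal `A` and
maximal `B` of `𝒮` with `A ⊊ B` and `B \ A ∉ 𝒮`. -/
def AugFam {V : Type*} (𝒮 : Set (Set V)) : Set (Set V) :=
  𝒮 ∪ {T | ∃ A B : Set V, MinimalIn 𝒮 A ∧ MaximalIn 𝒮 B ∧ A ⊂ B ∧ B \ A ∉ 𝒮 ∧ T = B \ A}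

/-- Every consecutive ordering of `V` to `𝒮'` is a contiguous ordering of `V` to `𝒮`. -/
theorem consecutive_of_aug_is_contiguous
    {V : Type*} [Fintype V] {n : ℕ} (hn : n = Fintype.card V)
    (𝒮 : Set (Set V)) (hne : ∅ ∉ 𝒮)
    (hsimple : SimpleFam 𝒮) (hsf : SeparatorFree 𝒮)
    (σ : Fin n ≃ V) (hσ : ConsecutiveOrd σ (AugFam 𝒮)) :
    ContiguousOrd σ 𝒮 := by
  classical
  constructor
  · exact fun S hS => hσ S (Or.inl hS)
  · intro S hS S' hS' hSS' i j hiS' hjS' hbound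
    by_contra h
    push_neg at h
    obtain ⟨hiS, hjS⟩ := h
    -- find a minimal A ∈ 𝒮 with A ⊆ S
    obtain ⟨A, ⟨hA𝒮, hAS⟩, hAmin⟩ :=
      Set.Finite.exists_minimalFor id {A | A ∈ 𝒮 ∧ A ⊆ S}
        (Set.toFinite _) ⟨S, hS, subset_rfl⟩
    have hAminIn : MinimalIn 𝒮 A := by
      refine ⟨hA𝒮, fun A' hA' hA'A => ?_⟩
      exact hA'A.antisymm (hAmin ⟨hA', hA'A.trans hAS⟩ hA'A)
    -- find a maximal B ∈ 𝒮 with S' ⊆ B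
    obtain ⟨B, ⟨hB𝒮, hS'B⟩, hBmax⟩ :=
      Set.Finite.exists_maximalFor id {B | B ∈ 𝒮 ∧ S' ⊆ B}
        (Set.toFinite _) ⟨S', hS', subset_rfl⟩
    have hBmaxIn : MaximalIn 𝒮 B := by
      refine ⟨hB𝒮, fun B' hB' hBB' => ?_⟩
      exact (hBmax ⟨hB', hS'B.trans hBB'⟩ hBB').antisymm hBB'
    have hAB : A ⊂ B := by
      refine ⟨(hAS.trans hSS').trans hS'B, fun hBA => ?_⟩
      exact hiS (hAS (hBA (hS'B hiS')))
    -- B \ A is in the augmented family, hence an interval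
    have hBA : B \ A ∈ AugFam 𝒮 := by
      by_cases hmem : B \ A ∈ 𝒮
      · exact Or.inl hmem
      · exact Or.inr ⟨A, B, hAminIn, hBmaxIn, hAB, hmem, rfl⟩
    have hint : IsIntervalIn σ (B \ A) := hσ _ hBA
    -- A is nonempty; its elements lie between i and j
    have hAne : A.Nonempty := by
      rcases Set.eq_empty_or_nonempty A with rfl | h
      · exact absurd hA𝒮 hne
      · exact h
    obtain ⟨a, ha⟩ := hAne
    set k := σ.symm a with hk
    have hka : σ k = a := σ.apply_symm_apply a
    have haS' : σ k ∈ S' := by rw [hka]; exact hSS' (hAS ha)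
    obtain ⟨hik, hkj⟩ := hbound k haS'
    have hiBA : σ i ∈ B \ A := ⟨hS'B hiS', fun hiA => hiS (hAS hiA)⟩
    have hjBA : σ j ∈ B \ A := ⟨hS'B hjS', fun hjA => hjS (hAS hjA)⟩
    have := hint i k j hik hkj hiBA hjBA
    rw [hka] at this
    exact this.2 ha
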